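/- Let Q ∈ ℝ^{n×n} be symmetric positive definite and a ∈ ℝ^n, and set κ = aᵀQ⁻¹a. Let Q₁⁻¹ ∈ ℝ^{(n+1)×(n+1)} be the block matrix with blocks Q⁻¹, Q⁻¹a, aᵀQ⁻¹ and 1 + κ; let U ∈ ℝ^{(n+1)×(n+1)} be the block matrix with blocks (Q + aaᵀ)⁻¹, 0, 0 and 0; and let v ∈ ℝ^{n+1} be the vector whose first n coordinates are Q⁻¹a/√(1 + κ) and whose last coordinate is √(1 + κ). Then Q₁⁻¹ − U = vvᵀ. In particular, for every z ∈ ℝ, (1 − z)·U + z·Q₁⁻¹ = U + z·vvᵀ. -/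

import Mathlib

open Matrix

lemma aux_mul_vecMulVec {m k l : Type*} [Fintype k] (M : Matrix m k ℝ) (u : k → ℝ) (v : l → ℝ) :
    M * vecMulVec u v = vecMulVec (M *ᵥ u) v := by
  ext i j
  simp [mul_apply, vecMulVec_apply, mulVec, dotProduct, Finset.sum_mul, mul_assoc]

lemma aux_vecMulVec_mul {m k l : Type*} [Fintype k] (u : m → ℝ) (v : k → ℝ) (M : Matrix k l ℝ) :
    vecMulVec u v * M = vecMulVec u (v ᵥ* M) := by
  ext i j
  simp [mul_apply, vecMulVec_apply, vecMul, dotProduct, Finset.mul_sum, mul_assoc]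

lemma aux_sherman (n : ℕ) (Q : Matrix (Fin n) (Fin n) ℝ) (hQ : Q.PosDef) (a : Fin n → ℝ) :
    (Q + vecMulVec a a)⁻¹ =
      Q⁻¹ - (1 + a ⬝ᵥ Q⁻¹ *ᵥ a)⁻¹ • vecMulVec (Q⁻¹ *ᵥ a) (Q⁻¹ *ᵥ a) := by
  have hκ : 0 ≤ a ⬝ᵥ Q⁻¹ *ᵥ a := by
    simpa using hQ.inv.posSemidef.re_dotProduct_nonneg a
  have h1 : (0:ℝ) < 1 + a ⬝ᵥ Q⁻¹ *ᵥ a := by linarith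
  have hsymm : Q⁻¹ᵀ = Q⁻¹ := by
    exact (by simpa using hQ.inv.isHermitian : Q⁻¹.IsSymm)
  have hvm : a ᵥ* Q⁻¹ = Q⁻¹ *ᵥ a := by
    rw [← hsymm, vecMul_transpose, hsymm]
  have hQQ : Q * Q⁻¹ = 1 := Q.mul_nonsing_inv hQ.det_pos.ne'.isUnit
  apply inv_eq_right_inv
  set u := Q⁻¹ *ᵥ a with hu
  set κ := a ⬝ᵥ Q⁻¹ *ᵥ a with hκdef
  have hQu : Q *ᵥ u = a := by
    rw [hu, mulVec_mulVec, hQQ, one_mulVec]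
  have hκu : κ = a ⬝ᵥ u := rfl
  have hau : a ᵥ* vecMulVec u u = κ • u := by
    funext j
    simp only [vecMul, dotProduct, vecMulVec_apply, Pi.smul_apply, smul_eq_mul, hκu, of_apply]
    rw [Finset.sum_mul]
    exact Finset.sum_congr rfl fun i _ => by ring
  rw [add_mul, mul_sub, mul_sub, hQQ, Matrix.mul_smul, aux_mul_vecMulVec, hQu,
    aux_vecMulVec_mul, hvm, Matrix.mul_smul, aux_vecMulVec_mul, hau]
  have : vecMulVec a (κ • u) = κ • vecMulVec a u := by
    ext i j; simp [vecMulVec_apply, mul_comm, mul_left_comm]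
  rw [this, smul_smul]
  have hcs : (1 + κ)⁻¹ • vecMulVec a u + ((1 + κ)⁻¹ * κ) • vecMulVec a u = vecMulVec a u := by
    rw [← add_smul]
    field_simp
    exact one_smul _ _
  rw [sub_add_sub_comm, hcs]
  simp

/-- With `κ = aᵀQ⁻¹a`, the difference between `Q₁⁻¹ = [[Q⁻¹, Q⁻¹a], [aᵀQ⁻¹, 1+κ]]`
and `U = [[(Q+aaᵀ)⁻¹, 0], [0, 0]]` is the rank-one matrix `vvᵀ`, where
`v = (Q⁻¹a/√(1+κ); √(1+κ))`. In particular `(1-z)U + zQ₁⁻¹ = U + z vvᵀ`. -/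
theorem Q1inv_decomposition
    (n : ℕ) (Q : Matrix (Fin n) (Fin n) ℝ) (hQ : Q.PosDef) (a : Fin n → ℝ) :
    (Matrix.fromBlocks Q⁻¹
        (Matrix.of fun i (_ : Unit) => Q⁻¹.mulVec a i)
        (Matrix.of fun (_ : Unit) j => Matrix.vecMul a Q⁻¹ j)
        (Matrix.of fun (_ : Unit) (_ : Unit) => 1 + a ⬝ᵥ Q⁻¹.mulVec a) -
      Matrix.fromBlocks (Q + vecMulVec a a)⁻¹ 0 0 0 =
      vecMulVec
        (Sum.elim (fun i => Q⁻¹.mulVec a i / Real.sqrt (1 + a ⬝ᵥ Q⁻¹.mulVec a))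
          fun _ : Unit => Real.sqrt (1 + a ⬝ᵥ Q⁻¹.mulVec a))
        (Sum.elim (fun i => Q⁻¹.mulVec a i / Real.sqrt (1 + a ⬝ᵥ Q⁻¹.mulVec a))
          fun _ : Unit => Real.sqrt (1 + a ⬝ᵥ Q⁻¹.mulVec a))) ∧
    ∀ z : ℝ,
      (1 - z) • Matrix.fromBlocks (Q + vecMulVec a a)⁻¹ 0 0 0 +
        z • Matrix.fromBlocks Q⁻¹
          (Matrix.of fun i (_ : Unit) => Q⁻¹.mulVec a i)
          (Matrix.of fun (_ : Unit) j => Matrix.vecMul a Q⁻¹ j)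
          (Matrix.of fun (_ : Unit) (_ : Unit) => 1 + a ⬝ᵥ Q⁻¹.mulVec a) =
      Matrix.fromBlocks (Q + vecMulVec a a)⁻¹ 0 0 0 +
        z • vecMulVec
          (Sum.elim (fun i => Q⁻¹.mulVec a i / Real.sqrt (1 + a ⬝ᵥ Q⁻¹.mulVec a))
            fun _ : Unit => Real.sqrt (1 + a ⬝ᵥ Q⁻¹.mulVec a))
          (Sum.elim (fun i => Q⁻¹.mulVec a i / Real.sqrt (1 + a ⬝ᵥ Q⁻¹.mulVec a))
            fun _ : Unit => Real.sqrt (1 + a ⬝ᵥ Q⁻¹.mulVec a)) := by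
  have hκ : 0 ≤ a ⬝ᵥ Q⁻¹ *ᵥ a := by
    simpa using hQ.inv.posSemidef.re_dotProduct_nonneg a
  have h1 : (0:ℝ) < 1 + a ⬝ᵥ Q⁻¹ *ᵥ a := by linarith
  have hss : Real.sqrt (1 + a ⬝ᵥ Q⁻¹ *ᵥ a) * Real.sqrt (1 + a ⬝ᵥ Q⁻¹ *ᵥ a) =
      1 + a ⬝ᵥ Q⁻¹ *ᵥ a := Real.mul_self_sqrt h1.le
  have hs0 : Real.sqrt (1 + a ⬝ᵥ Q⁻¹ *ᵥ a) ≠ 0 := by positivity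
  have hsymm : Q⁻¹ᵀ = Q⁻¹ := by exact (by simpa using hQ.inv.isHermitian : Q⁻¹.IsSymm)
  have hvm : a ᵥ* Q⁻¹ = Q⁻¹ *ᵥ a := by rw [← hsymm, vecMul_transpose, hsymm]
  have key : (Matrix.fromBlocks Q⁻¹
        (Matrix.of fun i (_ : Unit) => Q⁻¹.mulVec a i)
        (Matrix.of fun (_ : Unit) j => Matrix.vecMul a Q⁻¹ j)
        (Matrix.of fun (_ : Unit) (_ : Unit) => 1 + a ⬝ᵥ Q⁻¹.mulVec a) -
      Matrix.fromBlocks (Q + vecMulVec a a)⁻¹ 0 0 0 =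
      vecMulVec
        (Sum.elim (fun i => Q⁻¹.mulVec a i / Real.sqrt (1 + a ⬝ᵥ Q⁻¹.mulVec a))
          fun _ : Unit => Real.sqrt (1 + a ⬝ᵥ Q⁻¹.mulVec a))
        (Sum.elim (fun i => Q⁻¹.mulVec a i / Real.sqrt (1 + a ⬝ᵥ Q⁻¹.mulVec a))
          fun _ : Unit => Real.sqrt (1 + a ⬝ᵥ Q⁻¹.mulVec a))) := by
    rw [aux_sherman n Q hQ a]
    ext i j
    rcases i with i | i <;> rcases j with j | j <;>
        simp only [Matrix.sub_apply, fromBlocks_apply₁₁, fromBlocks_apply₁₂,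
          fromBlocks_apply₂₁, fromBlocks_apply₂₂, vecMulVec_apply, Sum.elim_inl,
          Sum.elim_inr, of_apply, Matrix.zero_apply, Pi.smul_apply, smul_eq_mul,
          sub_zero, hvm]
    · simp only [Matrix.smul_apply, vecMulVec_apply, smul_eq_mul]
      rw [div_mul_div_comm, hss]
      ring
    · rw [div_mul_cancel₀ _ hs0]
    · rw [mul_comm, div_mul_cancel₀ _ hs0]
    · exact hss.symm
  refine ⟨key, fun z => ?_⟩
  rw [sub_eq_iff_eq_add] at key
  rw [key]
  module
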